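/- Let γ_1, ..., γ_n ∈ M_k ⊗ M_k be states, each of whose range is not contained in the antisymmetric subspace of C^k ⊗ C^k. Then γ_1^Γ ⊗ ... ⊗ γ_n^Γ ≥ 0 if and only if γ_i^Γ ≥ 0 for every i. -/

import Mathlib

open Matrix ComplexOrder

def flipOp (k : ℕ) : Matrix (Fin k × Fin k) (Fin k × Fin k) ℂ :=
  Matrix.of fun x y => if x.1 = y.2 ∧ x.2 = y.1 then 1 else 0

def partialTranspose {k : ℕ} (γ : Matrix (Fin k × Fin k) (Fin k × Fin k) ℂ) :
    Matrix (Fin k × Fin k) (Fin k × Fin k) ℂ :=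
  Matrix.of fun x y => γ (x.1, y.2) (y.1, x.2)

/-- The tensor product `γ_1 ⊗ ⋯ ⊗ γ_n` of matrices on `C^k ⊗ C^k`. -/
def bigTensor {n k : ℕ} (γ : Fin n → Matrix (Fin k × Fin k) (Fin k × Fin k) ℂ) :
    Matrix (Fin n → Fin k × Fin k) (Fin n → Fin k × Fin k) ℂ :=
  Matrix.of fun x y => ∏ i, γ i (x i) (y i)

/-- The antisymmetric subspace of `C^k ⊗ C^k`: vectors `v` with `F_k v = -v`. -/
noncomputable def antisymSubspace (k : ℕ) : Submodule ℂ (Fin k × Fin k → ℂ) :=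
  LinearMap.ker (flipOp k + 1).mulVecLin

lemma bigTensor_mul {n k : ℕ} (A B : Fin n → Matrix (Fin k × Fin k) (Fin k × Fin k) ℂ) :
    bigTensor (fun i => A i * B i) = bigTensor A * bigTensor B := by
  ext x y
  simp only [bigTensor, Matrix.mul_apply, Matrix.of_apply]
  rw [Fintype.prod_sum (fun i j => A i (x i) j * B i j (y i))]
  exact Finset.sum_congr rfl fun z _ => Finset.prod_mul_distrib

lemma bigTensor_conjTranspose {n k : ℕ} (A : Fin n → Matrix (Fin k × Fin k) (Fin k × Fin k) ℂ) :
    (bigTensor A)ᴴ = bigTensor (fun i => (A i)ᴴ) := by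
  ext x y
  simp [bigTensor, conjTranspose_apply, star_prod]

lemma bigTensor_quadForm {n k : ℕ} (A : Fin n → Matrix (Fin k × Fin k) (Fin k × Fin k) ℂ)
    (v : Fin n → (Fin k × Fin k) → ℂ) :
    star (fun p : Fin n → Fin k × Fin k => ∏ i, v i (p i)) ⬝ᵥ
      (bigTensor A) *ᵥ (fun p : Fin n → Fin k × Fin k => ∏ i, v i (p i)) =
    ∏ i, star (v i) ⬝ᵥ (A i) *ᵥ (v i) := by
  have hw : ∀ p : Fin n → Fin k × Fin k,
      ((bigTensor A) *ᵥ fun q : Fin n → Fin k × Fin k => ∏ i, v i (q i)) p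
        = ∏ i, ((A i) *ᵥ v i) (p i) := by
    intro p
    simp only [mulVec, dotProduct, bigTensor, of_apply]
    rw [Fintype.prod_sum (fun i b => A i (p i) b * v i b)]
    exact Finset.sum_congr rfl fun q _ => Finset.prod_mul_distrib.symm
  simp only [dotProduct, Pi.star_apply, hw, star_prod, ← Finset.prod_mul_distrib]
  rw [← Fintype.prod_sum (fun i a => star (v i a) * ((A i) *ᵥ v i) a)]

lemma partialTranspose_isHermitian {k : ℕ} {γ : Matrix (Fin k × Fin k) (Fin k × Fin k) ℂ}
    (h : γ.IsHermitian) : (partialTranspose γ).IsHermitian := by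
  ext x y
  simp only [conjTranspose_apply, partialTranspose, of_apply]
  exact congrFun (congrFun h (x.1, y.2)) (y.1, x.2)

lemma single_quadForm {m : Type*} [Fintype m] [DecidableEq m] (A : Matrix m m ℂ) (x : m) :
    star (Pi.single x 1 : m → ℂ) ⬝ᵥ A *ᵥ (Pi.single x 1 : m → ℂ) = A x x := by
  simp [dotProduct, mulVec, Pi.single_apply, apply_ite]

lemma exists_pos_diag {m : Type*} [Fintype m] [DecidableEq m] {A : Matrix m m ℂ}
    (hA : A.PosSemidef) (h0 : A ≠ 0) : ∃ x, 0 < A x x := by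
  by_contra h
  push_neg at h
  apply h0
  have hz : ∀ x, A *ᵥ (Pi.single x 1 : m → ℂ) = 0 := by
    intro x
    rw [← hA.dotProduct_mulVec_zero_iff, single_quadForm]
    by_contra hne
    exact h x (lt_of_le_of_ne (by rw [← single_quadForm A x]; exact hA.dotProduct_mulVec_nonneg _) (Ne.symm hne))
  ext i j
  have := congrFun (hz j) i
  simpa [mulVec, dotProduct, Pi.single_apply] using this

lemma nonneg_of_mul_nonneg_pos {a c : ℂ} (h : 0 ≤ a * c) (hc : 0 < c) : 0 ≤ a := by
  rw [Complex.lt_def] at hc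
  rw [Complex.le_def] at h ⊢
  simp only [Complex.zero_re, Complex.zero_im, Complex.mul_re, Complex.mul_im] at *
  obtain ⟨hc1, hc2⟩ := hc
  obtain ⟨h1, h2⟩ := h
  have him : a.im = 0 := by
    have : a.re * c.im + a.im * c.re = 0 := h2.symm
    rw [← hc2] at this
    simp at this
    rcases this with h | h
    · exact h
    · exact absurd h.symm (ne_of_lt hc1)
  constructor
  · rw [← hc2] at h1; simp [him] at h1; nlinarith
  · exact him.symm

open scoped MatrixOrder in
lemma psd_sqrt_facts {m : Type*} [Fintype m] [DecidableEq m] {A : Matrix m m ℂ}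
    (hA : A.PosSemidef) : ∃ S : Matrix m m ℂ, Sᴴ = S ∧ S * S = A :=
  ⟨CFC.sqrt A, (CFC.sqrt_nonneg A).posSemidef.1, CFC.sqrt_mul_sqrt_self A hA.nonneg⟩

/-- For states `γ_1,...,γ_n` whose ranges are not contained in the
antisymmetric subspace, `γ_1^Γ ⊗ ⋯ ⊗ γ_n^Γ ≥ 0` iff `γ_i^Γ ≥ 0` for every `i`. -/
theorem stmt18 (n k : ℕ) (γ : Fin n → Matrix (Fin k × Fin k) (Fin k × Fin k) ℂ)
    (hγ : ∀ i, (γ i).PosSemidef)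
    (hrange : ∀ i, ¬ (LinearMap.range (γ i).mulVecLin ≤ antisymSubspace k)) :
    (bigTensor (fun i => partialTranspose (γ i))).PosSemidef ↔
      ∀ i, (partialTranspose (γ i)).PosSemidef := by
  constructor
  · intro H j
    refine .of_dotProduct_mulVec_nonneg (partialTranspose_isHermitian (hγ j).1) fun z => ?_
    have hne : ∀ i, γ i ≠ 0 := by
      intro i h0
      exact hrange i (by rw [h0]; simp [Matrix.mulVecLin_zero, LinearMap.range_zero])
    choose x hx using fun i => exists_pos_diag (hγ i) (hne i)
    set v : Fin n → (Fin k × Fin k) → ℂ :=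
      fun i => if i = j then z else Pi.single (x i) 1 with hv
    have hq := H.dotProduct_mulVec_nonneg (fun p => ∏ i, v i (p i))
    rw [bigTensor_quadForm] at hq
    rw [← Finset.prod_erase_mul Finset.univ _ (Finset.mem_univ j)] at hq
    have hvj : v j = z := by simp [hv]
    rw [hvj] at hq
    have hpos : 0 < ∏ i ∈ Finset.univ.erase j,
        star (v i) ⬝ᵥ (partialTranspose (γ i)) *ᵥ (v i) := by
      refine Finset.prod_pos fun i hi => ?_
      have hij : i ≠ j := Finset.ne_of_mem_erase hi
      have : v i = Pi.single (x i) 1 := by simp [hv, hij]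
      rw [this, single_quadForm]
      have : partialTranspose (γ i) (x i) (x i) = γ i (x i) (x i) := by
        simp [partialTranspose]
      rw [this]
      exact hx i
    rw [mul_comm] at hq
    exact nonneg_of_mul_nonneg_pos hq hpos
  · intro h
    choose S hS1 hS2 using fun i => psd_sqrt_facts (h i)
    have key : bigTensor (fun i => partialTranspose (γ i)) =
        (bigTensor (fun i : Fin n => S i))ᴴ * (bigTensor (fun i : Fin n => S i)) := by
      rw [bigTensor_conjTranspose]
      have h1 : (fun i : Fin n => (S i)ᴴ) = fun i : Fin n => S i :=
        funext fun i => hS1 i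
      have h2 : (fun i : Fin n => partialTranspose (γ i))
          = fun i : Fin n => S i * S i :=
        funext fun i => (hS2 i).symm
      rw [h1, h2, ← bigTensor_mul]
    rw [key]
    exact posSemidef_conjTranspose_mul_self _
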